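/- Fix an integer d ≥ 2. There exist K ≥ 1 and ε_0 > 0 such that for every ε ∈ (0,ε_0) there exists δ_0 > 0 with the following property for all δ ∈ (0,δ_0). Let A ⊆ [0,1]^d be a compact set with vol_d(A) ≥ δ^{d/2+ε}, and suppose that for every 1 ≤ j ≤ d the projection π^j(A) ⊆ ℝ^{d−1} obtained by deleting the j-th coordinate satisfies vol_{d−1}(π^j(A)) ≤ δ^{(d−1)/2 − ε}. Then there exists a compact A' ⊆ A with vol_d(A') ≥ δ^{Kε}·vol_d(A) such that for every 1 ≤ j ≤ d the coordinate projection π_j(A') ⊆ ℝ (the set of j-th coordinates of points of A') satisfies vol_1(π_j(A')) ≤ δ^{1/2 − Kε}. -/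

import Mathlib

open MeasureTheory Metric Set
open scoped ENNReal

noncomputable section

abbrev Euc (d : ℕ) : Type := EuclideanSpace ℝ (Fin d)

/-- The index map realizing the projection deleting the `j`-th coordinate:
`delIdx j i` is `i` if `i < j` and `i+1` otherwise. -/
def delIdx {d : ℕ} (j : Fin d) (i : Fin (d - 1)) : Fin d :=
  if i.val < j.val then ⟨i.val, by have := i.isLt; omega⟩
  else ⟨i.val + 1, by have := i.isLt; omega⟩

/-- The projection `ℝ^d → ℝ^{d-1}` deleting the `j`-th coordinate. -/
def delProj {d : ℕ} (j : Fin d) (x : Euc d) : Euc (d - 1) :=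
  WithLp.toLp 2 (fun i => x (delIdx j i))


def del {m : ℕ} (j : Fin (m+1)) (x : Fin (m+1) → ℝ) : Fin m → ℝ := fun i => x (j.succAbove i)

def slc {m : ℕ} (j : Fin (m+1)) (s : ℝ) (C : Set (Fin (m+1) → ℝ)) : Set (Fin m → ℝ) :=
  (fun y => j.insertNth s y) ⁻¹' C

abbrev eqv (m : ℕ) (j : Fin (m+1)) := MeasurableEquiv.piFinSuccAbove (fun _ : Fin (m+1) => ℝ) j

lemma volEuc {m : ℕ} (S : Set (EuclideanSpace ℝ (Fin m))) :
    volume S = (volume : Measure (Fin m → ℝ)) (WithLp.toLp 2 ⁻¹' S) := by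
  exact ((EuclideanSpace.volume_preserving_symm_measurableEquiv_toLp (Fin m)).symm.measure_preimage_equiv S).symm

lemma succAbove_coe {m : ℕ} (j : Fin (m+1)) (i : Fin m) :
    ((j.succAbove i : Fin (m+1)) : ℕ) = if (i:ℕ) < (j:ℕ) then (i:ℕ) else (i:ℕ)+1 := by
  rw [Fin.succAbove]
  split_ifs with h1 h2 h2
  · rfl
  · exact absurd (by simpa [Fin.lt_def] using h1) h2
  · exact absurd (by simpa [Fin.lt_def] using h2) h1
  · rfl

lemma predAbove_coe {m : ℕ} (i : Fin m) (j : Fin (m+1)) :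
    ((i.predAbove j : Fin m) : ℕ) = if (i:ℕ) < (j:ℕ) then (j:ℕ) - 1 else (j:ℕ) := by
  rw [Fin.predAbove]
  split_ifs with h1 h2 h2
  · rfl
  · exact absurd (by simpa [Fin.lt_def] using h1) h2
  · exact absurd (by simpa [Fin.lt_def] using h2) h1
  · rfl

lemma comm1 {n : ℕ} (j : Fin (n+2)) (i : Fin (n+1)) :
    (j.succAbove i).succAbove (i.predAbove j) = j := by
  have hi := i.isLt; have hj := j.isLt
  apply Fin.ext
  rw [succAbove_coe, predAbove_coe, succAbove_coe]
  split_ifs <;> omega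

lemma comm2 {n : ℕ} (j : Fin (n+2)) (i : Fin (n+1)) (k : Fin n) :
    (j.succAbove i).succAbove ((i.predAbove j).succAbove k) = j.succAbove (i.succAbove k) := by
  have hi := i.isLt; have hj := j.isLt; have hk := k.isLt
  apply Fin.ext
  rw [succAbove_coe, succAbove_coe, succAbove_coe, succAbove_coe, predAbove_coe, succAbove_coe]
  split_ifs <;> omega
lemma continuous_del {m : ℕ} (j : Fin (m+1)) : Continuous (del j) :=
  continuous_pi fun _ => continuous_apply _


lemma mk_preimage_eq_slc {m : ℕ} (j : Fin (m+1)) (s : ℝ) (C : Set (Fin (m+1) → ℝ)) :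
    Prod.mk s ⁻¹' ((eqv m j) '' C) = slc j s C := by
  rw [MeasurableEquiv.image_eq_preimage_symm]
  ext y
  simp only [mem_preimage, slc]
  rfl

lemma measurePreserving_eqv (m : ℕ) (j : Fin (m+1)) :
    MeasurePreserving (eqv m j) volume volume :=
  MeasureTheory.volume_preserving_piFinSuccAbove (fun _ : Fin (m+1) => ℝ) j

lemma vol_slc {m : ℕ} (j : Fin (m+1)) {C : Set (Fin (m+1) → ℝ)} (hC : MeasurableSet C) :
    volume C = ∫⁻ s, volume (slc j s C) := by
  have h1 : volume C = volume ((eqv m j) '' C) := by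
    rw [← (measurePreserving_eqv m j).measure_preimage
      ((eqv m j).measurableSet_image.2 hC).nullMeasurableSet,
      Set.preimage_image_eq C (eqv m j).injective]
  rw [h1, Measure.volume_eq_prod, Measure.prod_apply ((eqv m j).measurableSet_image.2 hC)]
  simp_rw [mk_preimage_eq_slc]

lemma measurable_vol_slc {m : ℕ} (j : Fin (m+1)) {C : Set (Fin (m+1) → ℝ)}
    (hC : MeasurableSet C) : Measurable fun s => volume (slc j s C) := by
  simp_rw [← mk_preimage_eq_slc]
  exact measurable_measure_prodMk_left ((eqv m j).measurableSet_image.2 hC)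

lemma slc_eq_image {m : ℕ} (j : Fin (m+1)) (s : ℝ) (C : Set (Fin (m+1) → ℝ)) :
    slc j s C = del j '' (C ∩ {x | x j = s}) := by
  ext y
  constructor
  · intro hy
    refine ⟨j.insertNth s y, ⟨hy, by simp⟩, ?_⟩
    funext i
    simp [del]
  · rintro ⟨x, ⟨hx, hxj⟩, rfl⟩
    have : j.insertNth s (del j x) = x := by
      rw [← hxj]
      exact Fin.insertNth_self_removeNth j x
    simpa [slc, this] using hx

lemma isCompact_slc {m : ℕ} (j : Fin (m+1)) (s : ℝ) {C : Set (Fin (m+1) → ℝ)}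
    (hC : IsCompact C) : IsCompact (slc j s C) := by
  rw [slc_eq_image]
  exact ((hC.inter_right (isClosed_singleton.preimage (continuous_apply j))).image
    (continuous_del j))

lemma slc_subset_del {m : ℕ} (j : Fin (m+1)) (s : ℝ) (C : Set (Fin (m+1) → ℝ)) :
    slc j s C ⊆ del j '' C := by
  rw [slc_eq_image]
  exact image_mono inter_subset_left


lemma del_slc {n : ℕ} (j : Fin (n+2)) (i : Fin (n+1)) (s : ℝ) (C : Set (Fin (n+2) → ℝ)) :
    del i '' slc j s C ⊆ slc (i.predAbove j) s (del (j.succAbove i) '' C) := by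
  rintro _ ⟨y, hy, rfl⟩
  have key : (i.predAbove j).insertNth s (del i y) = del (j.succAbove i) (j.insertNth s y) := by
    funext k
    by_cases hk : k = i.predAbove j
    · subst hk
      have h2 : del (j.succAbove i) (j.insertNth s y) (i.predAbove j)
          = (Fin.insertNth (α := fun _ => ℝ) j s y) ((j.succAbove i).succAbove (i.predAbove j)) := by rfl
      rw [h2, comm1]
      simp
    · obtain ⟨l, hl⟩ := Fin.exists_succAbove_eq hk
      have h2 : del (j.succAbove i) (j.insertNth s y) k
          = (Fin.insertNth (α := fun _ => ℝ) j s y) ((j.succAbove i).succAbove k) := by rfl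
      rw [h2, ← hl, comm2]
      simp [del]
  exact ⟨j.insertNth s y, hy, key.symm⟩
theorem lw : ∀ m : ℕ, ∀ B : Set (Fin (m+1) → ℝ), IsCompact B → B.Nonempty →
    volume B ^ m ≤ ∏ i : Fin (m+1), volume (del i '' B) := by
  intro m
  induction m with
  | zero =>
    intro B _ hne
    rw [pow_zero, Fin.prod_univ_one]
    have : del 0 '' B = univ := (hne.image _).eq_univ
    rw [this]
    simp [volume_pi, Measure.pi_univ]
  | succ m ih =>
    intro B hB hne
    set L : Fin (m+2) := Fin.last (m+1) with hL
    have hBmeas : MeasurableSet B := hB.isClosed.measurableSet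
    set c : ℝ≥0∞ := volume (del L '' B) with hc
    set p : ℝ := ((m+1 : ℕ) : ℝ)⁻¹ with hp
    have hp0 : 0 ≤ p := by positivity
    set g : Fin (m+1) → ℝ → ℝ≥0∞ :=
      fun i s => volume (slc (i.predAbove L) s (del (L.succAbove i) '' B)) with hg
    have hdelmeas : ∀ (k : Fin (m+2)), MeasurableSet (del k '' B) :=
      fun k => (hB.image (continuous_del k)).isClosed.measurableSet
    have hgmeas : ∀ i, Measurable (g i) := fun i => measurable_vol_slc _ (hdelmeas _)
    have key : ∀ s, volume (slc L s B) ≤ c ^ p * ∏ i, (g i s) ^ p := by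
      intro s
      rcases eq_empty_or_nonempty (slc L s B) with h | h
      · simp [h]
      · have h1 : volume (slc L s B) ^ m ≤ ∏ i : Fin (m+1), volume (del i '' slc L s B) :=
          ih _ (isCompact_slc L s hB) h
        have h2 : ∏ i : Fin (m+1), volume (del i '' slc L s B) ≤ ∏ i, g i s :=
          Finset.prod_le_prod' fun i _ => measure_mono (del_slc L i s B)
        have h3 : volume (slc L s B) ^ (m+1) ≤ c * ∏ i, g i s := by
          rw [pow_succ, mul_comm c]
          exact mul_le_mul' (le_trans h1 h2) (measure_mono (slc_subset_del L s B))
        calc volume (slc L s B) = (volume (slc L s B) ^ (m+1)) ^ p :=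
              (ENNReal.pow_rpow_inv_natCast (Nat.succ_ne_zero m) _).symm
        _ ≤ (c * ∏ i, g i s) ^ p := ENNReal.rpow_le_rpow h3 hp0
        _ = c ^ p * ∏ i, (g i s) ^ p := by
            rw [ENNReal.mul_rpow_of_nonneg _ _ hp0, ENNReal.prod_rpow_of_nonneg hp0]
    have hcpne : c ^ p ≠ ∞ :=
      ENNReal.rpow_ne_top_of_nonneg hp0 (hB.image (continuous_del L)).measure_lt_top.ne
    have main : volume B ≤ c ^ p * ∏ i, (volume (del (L.succAbove i) '' B)) ^ p := by
      rw [vol_slc L hBmeas]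
      calc ∫⁻ s, volume (slc L s B) ≤ ∫⁻ s, c ^ p * ∏ i, (g i s) ^ p := lintegral_mono key
      _ = c ^ p * ∫⁻ s, ∏ i, (g i s) ^ p := lintegral_const_mul' _ _ hcpne
      _ ≤ c ^ p * ∏ i, (∫⁻ s, g i s) ^ p := by
          refine mul_le_mul_right ?_ _
          refine ENNReal.lintegral_prod_norm_pow_le Finset.univ
            (fun i _ => (hgmeas i).aemeasurable) ?_ (fun i _ => hp0)
          rw [Finset.sum_const, Finset.card_univ, Fintype.card_fin, hp, nsmul_eq_mul]
          rw [mul_inv_cancel₀ (by positivity)]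
      _ = c ^ p * ∏ i, (volume (del (L.succAbove i) '' B)) ^ p := by
          congr 1
          refine Finset.prod_congr rfl fun i _ => ?_
          rw [hg]
          rw [← vol_slc (i.predAbove L) (hdelmeas _)]
    have final : volume B ^ (m+1) ≤ c * ∏ i : Fin (m+1), volume (del (L.succAbove i) '' B) := by
      calc volume B ^ (m+1) ≤ (c ^ p * ∏ i, (volume (del (L.succAbove i) '' B)) ^ p) ^ (m+1) :=
            pow_le_pow_left' main (m+1)
      _ = c * ∏ i : Fin (m+1), volume (del (L.succAbove i) '' B) := by
          rw [mul_pow, ← Finset.prod_pow]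
          rw [ENNReal.rpow_inv_natCast_pow (Nat.succ_ne_zero m)]
          congr 1
          exact Finset.prod_congr rfl fun i _ =>
            ENNReal.rpow_inv_natCast_pow (Nat.succ_ne_zero m) _
    rw [Fin.prod_univ_castSucc, mul_comm]
    have hsa : ∀ i : Fin (m+1), Fin.castSucc i = L.succAbove i := fun i =>
      (congrFun (Fin.succAbove_last (n := m+1)) i).symm
    calc volume B ^ (m+1) ≤ c * ∏ i : Fin (m+1), volume (del (L.succAbove i) '' B) := final
    _ = volume (del L '' B) * ∏ i : Fin (m+1), volume (del (Fin.castSucc i) '' B) := by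
        rw [hc]
        congr 1
        exact Finset.prod_congr rfl fun i _ => by rw [hsa i]

theorem loss {n : ℕ} {A : Set (Fin (n+2) → ℝ)} (hA : IsCompact A) (j : Fin (n+2))
    (τ : ℝ≥0∞) (hτ : τ ≠ ∞) :
    volume (A ∩ {x | volume (slc j (x j) A) < τ})
      ≤ τ ^ (((n+1:ℕ):ℝ)⁻¹)
        * ∏ i : Fin (n+1), (volume (del (j.succAbove i) '' A)) ^ (((n+1:ℕ):ℝ)⁻¹) := by
  have hAmeas : MeasurableSet A := hA.isClosed.measurableSet
  set φ : ℝ → ℝ≥0∞ := fun s => volume (slc j s A) with hφdef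
  have hφ : Measurable φ := measurable_vol_slc j hAmeas
  set p : ℝ := ((n+1 : ℕ) : ℝ)⁻¹ with hp
  have hp0 : 0 ≤ p := by positivity
  set B : Set (Fin (n+2) → ℝ) := A ∩ (fun x => x j) ⁻¹' {s | φ s < τ} with hBdef
  have hBmeas : MeasurableSet B :=
    hAmeas.inter ((measurable_pi_apply j) (measurableSet_lt hφ measurable_const))
  have hBset : (A ∩ {x | volume (slc j (x j) A) < τ}) = B := rfl
  rw [hBset]
  set g : Fin (n+1) → ℝ → ℝ≥0∞ :=
    fun i s => volume (slc (i.predAbove j) s (del (j.succAbove i) '' A)) with hg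
  have hdelmeas : ∀ (k : Fin (n+2)), MeasurableSet (del k '' A) :=
    fun k => (hA.image (continuous_del k)).isClosed.measurableSet
  have hgmeas : ∀ i, Measurable (g i) := fun i => measurable_vol_slc _ (hdelmeas _)
  have hslcB : ∀ s, slc j s B = slc j s A ∩ (if φ s < τ then univ else ∅) := by
    intro s
    ext y
    have hyj : (Fin.insertNth (α := fun _ => ℝ) j s y) j = s := by simp
    by_cases hs : φ s < τ <;> simp [slc, hBdef, hyj, hs]
  have key : ∀ s, volume (slc j s B) ≤ τ ^ p * ∏ i, (g i s) ^ p := by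
    intro s
    by_cases hs : φ s < τ
    · have hBA : slc j s B = slc j s A := by rw [hslcB s, if_pos hs, inter_univ]
      rw [hBA]
      rcases eq_empty_or_nonempty (slc j s A) with h | h
      · simp [h]
      · have h1 : volume (slc j s A) ^ n ≤ ∏ i : Fin (n+1), volume (del i '' slc j s A) :=
          lw n _ (isCompact_slc j s hA) h
        have h2 : ∏ i : Fin (n+1), volume (del i '' slc j s A) ≤ ∏ i, g i s :=
          Finset.prod_le_prod' fun i _ => measure_mono (del_slc j i s A)
        have h3 : volume (slc j s A) ^ (n+1) ≤ τ * ∏ i, g i s := by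
          rw [pow_succ, mul_comm τ]
          exact mul_le_mul' (le_trans h1 h2) hs.le
        calc volume (slc j s A) = (volume (slc j s A) ^ (n+1)) ^ p :=
              (ENNReal.pow_rpow_inv_natCast (Nat.succ_ne_zero n) _).symm
        _ ≤ (τ * ∏ i, g i s) ^ p := ENNReal.rpow_le_rpow h3 hp0
        _ = τ ^ p * ∏ i, (g i s) ^ p := by
            rw [ENNReal.mul_rpow_of_nonneg _ _ hp0, ENNReal.prod_rpow_of_nonneg hp0]
    · have : slc j s B = ∅ := by rw [hslcB s, if_neg hs, inter_empty]
      simp [this]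
  have hτpne : τ ^ p ≠ ∞ := ENNReal.rpow_ne_top_of_nonneg hp0 hτ
  calc volume B = ∫⁻ s, volume (slc j s B) := vol_slc j hBmeas
  _ ≤ ∫⁻ s, τ ^ p * ∏ i, (g i s) ^ p := lintegral_mono key
  _ = τ ^ p * ∫⁻ s, ∏ i, (g i s) ^ p := lintegral_const_mul' _ _ hτpne
  _ ≤ τ ^ p * ∏ i, (∫⁻ s, g i s) ^ p := by
      refine mul_le_mul_right ?_ _
      refine ENNReal.lintegral_prod_norm_pow_le Finset.univ
        (fun i _ => (hgmeas i).aemeasurable) ?_ (fun i _ => hp0)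
      rw [Finset.sum_const, Finset.card_univ, Fintype.card_fin, hp, nsmul_eq_mul]
      rw [mul_inv_cancel₀ (by positivity)]
  _ = τ ^ p * ∏ i, (volume (del (j.succAbove i) '' A)) ^ p := by
      congr 1
      refine Finset.prod_congr rfl fun i _ => ?_
      rw [hg, ← vol_slc (i.predAbove j) (hdelmeas _)]

lemma delIdx_eq {n : ℕ} (j : Fin (n+2)) : delIdx (d := n+2) j = j.succAbove := by
  funext i
  apply Fin.ext
  rw [succAbove_coe]
  unfold delIdx
  split_ifs with h <;> simp

/-- **Projection refinement (Lemma 2.6).** If `A ⊆ [0,1]^d` has measure about `δ^{d/2}`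
and all its `(d-1)`-dimensional coordinate projections have measure at most about
`δ^{(d-1)/2}`, then a large-measure subset `A'` has all one-dimensional coordinate
projections of measure at most about `δ^{1/2}`. -/
theorem projection_refinement (d : ℕ) (hd : 2 ≤ d) :
    ∃ K : ℝ, 1 ≤ K ∧ ∃ ε₀ : ℝ, 0 < ε₀ ∧ ∀ ε : ℝ, 0 < ε → ε < ε₀ →
      ∃ δ₀ : ℝ, 0 < δ₀ ∧ ∀ δ : ℝ, 0 < δ → δ < δ₀ →
      ∀ A : Set (Euc d),
        IsCompact A →
        A ⊆ {x : Euc d | ∀ i, x i ∈ Icc (0 : ℝ) 1} →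
        ENNReal.ofReal (δ ^ ((d : ℝ) / 2 + ε)) ≤ volume A →
        (∀ j : Fin d,
          volume (delProj j '' A) ≤ ENNReal.ofReal (δ ^ (((d : ℝ) - 1) / 2 - ε))) →
        ∃ A' : Set (Euc d), A' ⊆ A ∧ IsCompact A' ∧
          ENNReal.ofReal (δ ^ (K * ε)) * volume A ≤ volume A' ∧
          ∀ j : Fin d,
            volume ((fun x : Euc d => x j) '' A')
              ≤ ENNReal.ofReal (δ ^ ((1 : ℝ) / 2 - K * ε)) := by
  obtain ⟨n, rfl⟩ : ∃ n, d = n + 2 := ⟨d - 2, by omega⟩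
  clear hd
  set dR : ℝ := ((n+2 : ℕ) : ℝ) with hdR
  have hdRpos : 0 < dR := by positivity
  have hn0 : (0:ℝ) ≤ (n:ℝ) := Nat.cast_nonneg n
  have hdR2 : (2:ℝ) ≤ dR := by rw [hdR]; push_cast; linarith
  refine ⟨2 * dR, by linarith, 1, one_pos, ?_⟩
  intro ε hε hε1
  set K : ℝ := 2 * dR with hK
  have hKε : 0 < K * ε := by positivity
  refine ⟨min (min ((2*dR) ^ (-(dR-1)/(3*ε)) : ℝ) ((4:ℝ) ^ (-(1:ℝ)/(K*ε)))) (1/2), by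
    refine lt_min (lt_min ?_ ?_) (by norm_num) <;> exact Real.rpow_pos_of_pos (by positivity) _, ?_⟩
  intro δ hδ hδ0
  have hδhalf : δ < 1/2 := lt_of_lt_of_le hδ0 (min_le_right _ _)
  have hδ1 : δ < 1 := by linarith
  -- numeric conditions
  have C2 : (2*dR) ^ (n+1 : ℕ) * δ ^ (3*ε) ≤ 1 := by
    have h1 : δ ^ (3*ε) ≤ (2*dR) ^ (-(dR-1)) := by
      have h := Real.rpow_le_rpow hδ.le
        (le_of_lt (lt_of_lt_of_le hδ0 (le_trans (min_le_left _ _) (min_le_left _ _))))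
        (by positivity : (0:ℝ) ≤ 3*ε)
      rwa [← Real.rpow_mul (by positivity),
        div_mul_cancel₀ _ (ne_of_gt (by positivity : (0:ℝ) < 3*ε))] at h
    calc (2*dR) ^ (n+1 : ℕ) * δ ^ (3*ε) ≤ (2*dR) ^ (n+1 : ℕ) * (2*dR) ^ (-(dR-1)) :=
          mul_le_mul_of_nonneg_left h1 (by positivity)
    _ = (2*dR) ^ (((n+1:ℕ):ℝ) + (-(dR-1))) := by
        rw [← Real.rpow_natCast (2*dR) (n+1), ← Real.rpow_add (by positivity)]
    _ = 1 := by
        rw [show ((n+1:ℕ):ℝ) + (-(dR-1)) = 0 by rw [hdR]; push_cast; ring, Real.rpow_zero]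
  have C3 : δ ^ (K*ε) ≤ 1/4 := by
    have h := Real.rpow_le_rpow hδ.le
      (le_of_lt (lt_of_lt_of_le hδ0 (le_trans (min_le_left _ _) (min_le_right _ _))))
      (le_of_lt hKε)
    rwa [← Real.rpow_mul (by norm_num), div_mul_cancel₀ _ (ne_of_gt hKε),
      Real.rpow_neg_one, ← one_div] at h
  intro Ae hAe _hcube hyp3 hyp4
  -- move to the pi world
  set A : Set (Fin (n+2) → ℝ) := WithLp.toLp 2 ⁻¹' Ae with hAdef
  have hA : IsCompact A := by
    have := hAe.image (PiLp.continuous_ofLp 2 _)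
    convert this using 1
    ext x
    exact ⟨fun h => ⟨_, h, rfl⟩, by rintro ⟨y, hy, rfl⟩; exact hy⟩
  have hAmeas : MeasurableSet A := hA.isClosed.measurableSet
  set V : ℝ≥0∞ := volume A with hV
  have hVeq : volume Ae = V := volEuc Ae
  set V0 : ℝ≥0∞ := ENNReal.ofReal (δ ^ (dR / 2 + ε)) with hV0
  have hV0V : V0 ≤ V := by rw [← hVeq]; exact hyp3
  have hV0pos : 0 < V0 := ENNReal.ofReal_pos.2 (Real.rpow_pos_of_pos hδ _)
  have hVpos : V ≠ 0 := (lt_of_lt_of_le hV0pos hV0V).ne'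
  have hVfin : V ≠ ∞ := hA.measure_lt_top.ne
  set Mb : ℝ≥0∞ := ENNReal.ofReal (δ ^ ((dR - 1)/2 - ε)) with hMb
  have hMb0 : Mb ≠ 0 := (ENNReal.ofReal_pos.2 (Real.rpow_pos_of_pos hδ _)).ne'
  have hMbfin : Mb ≠ ∞ := ENNReal.ofReal_ne_top
  have hM : ∀ j : Fin (n+2), volume (del j '' A) ≤ Mb := by
    intro j
    have hset : (WithLp.toLp 2) ⁻¹' (delProj (d := n+2) j '' Ae) = del j '' A := by
      ext y
      constructor
      · rintro ⟨x, hx, hxy⟩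
        refine ⟨WithLp.ofLp x, hx, ?_⟩
        have := congrArg WithLp.ofLp hxy
        simp only [delProj, WithLp.ofLp_toLp] at this
        rw [← this, delIdx_eq]
        rfl
      · rintro ⟨x, hx, rfl⟩
        refine ⟨WithLp.toLp 2 x, hx, ?_⟩
        show WithLp.toLp 2 _ = WithLp.toLp 2 _
        congr 1
    have h4 := hyp4 j
    rw [volEuc, hset] at h4
    exact h4
  -- threshold
  set c0 : ℝ≥0∞ := 2 * ((n+2 : ℕ) : ℝ≥0∞) with hc0
  have hc00 : c0 ≠ 0 := by simp [hc0]
  have hc0fin : c0 ≠ ∞ := by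
    rw [hc0]; exact ENNReal.mul_ne_top (by norm_num) (ENNReal.natCast_ne_top _)
  set q : ℝ≥0∞ := V / (c0 * Mb) with hq
  have hq0 : q ≠ 0 := by
    simp only [hq, ne_eq, ENNReal.div_eq_zero_iff, not_or]
    exact ⟨hVpos, ENNReal.mul_ne_top hc0fin hMbfin⟩
  have hqfin : q ≠ ∞ := by
    rw [hq]
    exact (ENNReal.div_lt_top hVfin (mul_ne_zero hc00 hMb0)).ne
  set τ : ℝ≥0∞ := q ^ (n+1 : ℕ) with hτ
  have hτ0 : τ ≠ 0 := pow_ne_zero _ hq0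
  have hτfin : τ ≠ ∞ := ENNReal.pow_ne_top hqfin
  have hτp : τ ^ (((n+1:ℕ):ℝ)⁻¹) = q := ENNReal.pow_rpow_inv_natCast (Nat.succ_ne_zero n) q
  set φ : Fin (n+2) → ℝ → ℝ≥0∞ := fun j s => volume (slc j s A) with hφdef
  have hφ : ∀ j, Measurable (φ j) := fun j => measurable_vol_slc j hAmeas
  set X : Fin (n+2) → Set ℝ := fun j => {s | τ ≤ φ j s} with hX
  have hXmeas : ∀ j, MeasurableSet (X j) := fun j => measurableSet_le measurable_const (hφ j)
  -- loss bound per coordinate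
  set B : Fin (n+2) → Set (Fin (n+2) → ℝ) := fun j => A ∩ {x | φ j (x j) < τ} with hB
  have hloss : ∀ j, volume (B j) ≤ V / c0 := by
    intro j
    have h1 := loss hA j τ hτfin
    have h2 : ∏ i : Fin (n+1), (volume (del (j.succAbove i) '' A)) ^ (((n+1:ℕ):ℝ)⁻¹)
        ≤ Mb := by
      calc ∏ i : Fin (n+1), (volume (del (j.succAbove i) '' A)) ^ (((n+1:ℕ):ℝ)⁻¹)
          ≤ ∏ _i : Fin (n+1), Mb ^ (((n+1:ℕ):ℝ)⁻¹) :=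
            Finset.prod_le_prod' fun i _ => ENNReal.rpow_le_rpow (hM _) (by positivity)
      _ = (Mb ^ (((n+1:ℕ):ℝ)⁻¹)) ^ (n+1 : ℕ) := by
            rw [Finset.prod_const, Finset.card_univ, Fintype.card_fin]
      _ = Mb := ENNReal.rpow_inv_natCast_pow (Nat.succ_ne_zero n) Mb
    calc volume (B j) ≤ τ ^ (((n+1:ℕ):ℝ)⁻¹)
          * ∏ i : Fin (n+1), (volume (del (j.succAbove i) '' A)) ^ (((n+1:ℕ):ℝ)⁻¹) := h1
    _ ≤ q * Mb := by rw [hτp]; exact mul_le_mul_right h2 q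
    _ = V / c0 := by
        rw [hq, div_eq_mul_inv, ENNReal.mul_inv (Or.inl hc00) (Or.inl hc0fin),
          mul_assoc, mul_assoc, ENNReal.inv_mul_cancel hMb0 hMbfin, mul_one,
          ← div_eq_mul_inv]
  -- Markov bound
  have hXbound : ∀ j, volume (X j) ≤ V / τ := by
    intro j
    have h1 : τ * volume (X j) ≤ ∫⁻ s, φ j s := mul_meas_ge_le_lintegral₀ (hφ j).aemeasurable τ
    rw [← vol_slc j hAmeas] at h1
    rw [ENNReal.le_div_iff_mul_le (Or.inl hτ0) (Or.inl hτfin), mul_comm]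
    exact h1
  -- key numeric inequality
  set T : ℝ≥0∞ := ENNReal.ofReal (δ ^ ((1:ℝ)/2 - K * ε)) with hT
  have hkey : (c0 * Mb) ^ (n+1 : ℕ) ≤ T * V0 ^ (n : ℕ) := by
    have hc0R : c0 = ENNReal.ofReal (2*dR) := by
      rw [hc0, hdR, ENNReal.ofReal_mul (by norm_num), ENNReal.ofReal_ofNat,
        ENNReal.ofReal_natCast]
    have hL : (c0 * Mb) ^ (n+1 : ℕ)
        = ENNReal.ofReal ((2*dR * δ ^ ((dR - 1)/2 - ε)) ^ (n+1 : ℕ)) := by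
      rw [hc0R, hMb, ← ENNReal.ofReal_mul (by positivity), ← ENNReal.ofReal_pow (by positivity)]
    have hR : T * V0 ^ (n : ℕ)
        = ENNReal.ofReal (δ ^ ((1:ℝ)/2 - K * ε) * (δ ^ (dR/2 + ε)) ^ (n : ℕ)) := by
      rw [hT, hV0, ← ENNReal.ofReal_pow (by positivity), ← ENNReal.ofReal_mul (by positivity)]
    rw [hL, hR]
    apply ENNReal.ofReal_le_ofReal
    rw [mul_pow, ← Real.rpow_natCast (δ ^ ((dR - 1)/2 - ε)) (n+1),
      ← Real.rpow_natCast (δ ^ (dR/2 + ε)) n,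
      ← Real.rpow_mul hδ.le, ← Real.rpow_mul hδ.le, ← Real.rpow_add hδ]
    have hexp : (1:ℝ)/2 - K * ε + (dR/2 + ε) * (n:ℝ)
        = ((dR - 1)/2 - ε) * ((n+1:ℕ):ℝ) + (-(3*ε)) := by
      rw [hK, hdR]
      push_cast
      ring
    rw [hexp, Real.rpow_add hδ, mul_comm ((2*dR) ^ (n+1:ℕ))]
    refine mul_le_mul_of_nonneg_left ?_ (Real.rpow_nonneg hδ.le _)
    have hp3 : 0 < δ ^ (3*ε) := Real.rpow_pos_of_pos hδ _
    rw [Real.rpow_neg hδ.le, ← one_div, le_div_iff₀ hp3]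
    exact C2
  have hVτ : V / τ ≤ T := by
    have hcm0 : (c0*Mb) ^ (n+1:ℕ) ≠ 0 := pow_ne_zero _ (mul_ne_zero hc00 hMb0)
    have hcmfin : (c0*Mb) ^ (n+1:ℕ) ≠ ∞ := ENNReal.pow_ne_top (ENNReal.mul_ne_top hc0fin hMbfin)
    have hτeq : τ = V ^ (n+1:ℕ) * (((c0*Mb) ^ (n+1:ℕ)))⁻¹ := by
      rw [hτ, hq, div_eq_mul_inv, mul_pow, ← ENNReal.inv_pow]
    have step : V * (c0*Mb) ^ (n+1:ℕ) ≤ T * V ^ (n+1:ℕ) := by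
      calc V * (c0*Mb) ^ (n+1:ℕ) ≤ V * (T * V0 ^ (n:ℕ)) := mul_le_mul_right hkey V
      _ ≤ V * (T * V ^ (n:ℕ)) :=
          mul_le_mul_right (mul_le_mul_right (pow_le_pow_left' hV0V n) T) V
      _ = T * V ^ (n+1:ℕ) := by rw [pow_succ]; ring
    rw [ENNReal.div_le_iff_le_mul (Or.inl hτ0) (Or.inl hτfin)]
    calc V = V * ((c0*Mb) ^ (n+1:ℕ) * (((c0*Mb) ^ (n+1:ℕ)))⁻¹) := by
          rw [ENNReal.mul_inv_cancel hcm0 hcmfin, mul_one]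
    _ = (V * (c0*Mb) ^ (n+1:ℕ)) * (((c0*Mb) ^ (n+1:ℕ)))⁻¹ := by ring
    _ ≤ (T * V ^ (n+1:ℕ)) * (((c0*Mb) ^ (n+1:ℕ)))⁻¹ := mul_le_mul_left step _
    _ = T * τ := by rw [hτeq]; ring
  have hXT : ∀ j, volume (X j) ≤ T := fun j => le_trans (hXbound j) hVτ
  -- the refined set
  set S : Set (Fin (n+2) → ℝ) := A ∩ ⋂ j, (fun x => x j) ⁻¹' (X j) with hS
  have hSmeas : MeasurableSet S :=
    hAmeas.inter (MeasurableSet.iInter fun j => (hXmeas j).preimage (measurable_pi_apply j))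
  have cover : A ⊆ S ∪ ⋃ j, B j := by
    intro x hx
    by_cases h : ∀ j, τ ≤ φ j (x j)
    · exact Or.inl ⟨hx, mem_iInter.2 fun j => h j⟩
    · push_neg at h
      obtain ⟨j, hj⟩ := h
      exact Or.inr (mem_iUnion.2 ⟨j, hx, hj⟩)
  have hS2 : V / 2 ≤ volume S := by
    have h1 : V ≤ volume S + ∑ j : Fin (n+2), volume (B j) := by
      calc V ≤ volume (S ∪ ⋃ j, B j) := measure_mono cover
      _ ≤ volume S + volume (⋃ j, B j) := measure_union_le _ _
      _ ≤ volume S + ∑ j : Fin (n+2), volume (B j) :=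
          add_le_add_right (measure_iUnion_fintype_le _ _) _
    have h2 : ∑ j : Fin (n+2), volume (B j) ≤ V / 2 := by
      calc ∑ j : Fin (n+2), volume (B j) ≤ ∑ _j : Fin (n+2), V / c0 :=
            Finset.sum_le_sum fun j _ => hloss j
      _ = ((n+2:ℕ) : ℝ≥0∞) * (V / c0) := by
          rw [Finset.sum_const, Finset.card_univ, Fintype.card_fin, nsmul_eq_mul]
      _ = V / 2 := by
          rw [hc0, div_eq_mul_inv, ENNReal.mul_inv (Or.inl (by norm_num))
            (Or.inl (by norm_num)), div_eq_mul_inv]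
          calc ((n+2:ℕ) : ℝ≥0∞) * (V * (2⁻¹ * (((n+2:ℕ) : ℝ≥0∞))⁻¹))
              = (((n+2:ℕ) : ℝ≥0∞) * (((n+2:ℕ) : ℝ≥0∞))⁻¹) * (V * 2⁻¹) := by ring
          _ = V * 2⁻¹ := by
              rw [ENNReal.mul_inv_cancel (by simp) (ENNReal.natCast_ne_top _), one_mul]
    have hhalffin : V / 2 ≠ ∞ := (lt_of_le_of_lt ENNReal.half_le_self
      (lt_top_iff_ne_top.2 hVfin)).ne
    have h3 : V/2 + V/2 ≤ volume S + V/2 := by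
      rw [ENNReal.add_halves]
      exact le_trans h1 (add_le_add_right h2 _)
    exact (ENNReal.add_le_add_iff_right hhalffin).1 h3
  -- extract a compact subset via inner regularity (in the Euclidean space)
  have hSfin : volume S ≠ ∞ := ne_top_of_le_ne_top hVfin (measure_mono inter_subset_left)
  set W : ℝ≥0∞ := 4⁻¹ * V with hW
  have hW0 : W ≠ 0 := by
    rw [hW]; exact mul_ne_zero (by norm_num) hVpos
  have hWfin : W ≠ ∞ := ENNReal.mul_ne_top (by norm_num) hVfin
  have hWW : W + W = V / 2 := by
    rw [hW, ← add_mul, div_eq_mul_inv, mul_comm V]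
    congr 1
    rw [show (4:ℝ≥0∞) = 2*2 by norm_num, ENNReal.mul_inv (Or.inl (by norm_num))
      (Or.inl (by norm_num)), ← two_mul, ← mul_assoc,
      ENNReal.mul_inv_cancel (by norm_num) (by norm_num), one_mul]
  obtain ⟨K', hK'sub, hK'cpt, hK'vol⟩ :=
    MeasurableSet.exists_isCompact_lt_add (μ := (volume : Measure (Euc (n+2))))
      (A := (WithLp.ofLp ⁻¹' S : Set (Euc (n+2))))
      (hSmeas.preimage (PiLp.continuous_ofLp 2 _).measurable)
      (by rw [volEuc]; exact hSfin) (ε := W) hW0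
  have hK'pi : W ≤ (volume : Measure (Fin (n+2) → ℝ)) (WithLp.toLp 2 ⁻¹' K') := by
    have h1 : (volume : Measure (Fin (n+2) → ℝ)) S
        < (volume : Measure (Fin (n+2) → ℝ)) (WithLp.toLp 2 ⁻¹' K') + W := by
      have := hK'vol
      rw [volEuc, volEuc] at this
      exact this
    have h2 : W + W ≤ (volume : Measure (Fin (n+2) → ℝ)) (WithLp.toLp 2 ⁻¹' K') + W := by
      rw [hWW]
      exact le_trans hS2 h1.le
    exact (ENNReal.add_le_add_iff_right hWfin).1 h2
  refine ⟨K', fun x hx => (hK'sub hx).1, hK'cpt, ?_, ?_⟩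
  · rw [hVeq, volEuc K']
    calc ENNReal.ofReal (δ ^ (K * ε)) * V ≤ 4⁻¹ * V := by
          refine mul_le_mul_left ?_ V
          calc ENNReal.ofReal (δ ^ (K * ε)) ≤ ENNReal.ofReal (1/4) :=
                ENNReal.ofReal_le_ofReal C3
          _ = 4⁻¹ := by
              rw [one_div, ENNReal.ofReal_inv_of_pos (by norm_num), ENNReal.ofReal_ofNat]
    _ = W := hW.symm
    _ ≤ _ := hK'pi
  · intro j
    have himg : (fun x : Euc (n+2) => x j) '' K' ⊆ X j := by
      rintro _ ⟨x, hx, rfl⟩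
      have hxS : WithLp.ofLp x ∈ S := hK'sub hx
      exact mem_iInter.1 hxS.2 j
    exact le_trans (measure_mono himg) (hXT j)
end
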